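/- Let D ≥ 1 be a real number that is the global dimension of a modular category over ℂ with Virasoro central charge c, so that sign(s_{00}) e^{πic/4} = Σ_i |X_i|² θ_i / √D with |θ_i| = 1, |X_0|² = 1, and all |X_i|² > 0 summing to D. Then |sign(s_{00}) e^{πic/4} − D^{−1/2}|² ≤ (D−1)²/D, and consequently sign(s_{00}) cos(πc/4) ≥ (3 − D)√D / 2. -/

import Mathlib

/-- Bound on the global dimension of a modular category in terms of its Virasoro central
charge: from the Gaussian sum expression `s·e^{πic/4} = ∑ |X_i|² θ_i / √D` with `|θ_i|=1`,
`θ_0 = 1`, `|X_0|² = 1`, `|X_i|² > 0`, `∑ |X_i|² = D ≥ 1`, one gets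
`|s·e^{πic/4} − D^{−1/2}|² ≤ (D−1)²/D` and hence `s·cos(πc/4) ≥ (3−D)√D/2`. -/
theorem stmt15 (I : Type*) [Fintype I] (z : I)
    (D : ℝ) (hD : 1 ≤ D)
    (θ : I → ℂ) (hθ : ∀ i, ‖θ i‖ = 1) (hθ0 : θ z = 1)
    (x : I → ℝ) (hx : ∀ i, 0 < x i) (hx0 : x z = 1) (hsum : ∑ i, x i = D)
    (s : ℝ) (hs : s = 1 ∨ s = -1)
    (c : ℝ)
    (hgauss : (s : ℂ) * Complex.exp (Real.pi * c / 4 * Complex.I) =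
      (∑ i, (x i : ℂ) * θ i) / (Real.sqrt D : ℂ)) :
    ‖(s : ℂ) * Complex.exp (Real.pi * c / 4 * Complex.I)
        - (1 / (Real.sqrt D : ℂ))‖ ^ 2 ≤ (D - 1) ^ 2 / D ∧
    s * Real.cos (Real.pi * c / 4) ≥ (3 - D) * Real.sqrt D / 2 := by
  classical
  have hDpos : (0:ℝ) < D := lt_of_lt_of_le one_pos hD
  have hsq : Real.sqrt D > 0 := Real.sqrt_pos.2 hDpos
  have hsqsq : Real.sqrt D ^ 2 = D := Real.sq_sqrt hDpos.le
  have hsqne : (Real.sqrt D : ℂ) ≠ 0 := by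
    exact_mod_cast ne_of_gt hsq
  -- rewrite the difference
  have hsplit : (∑ i, (x i : ℂ) * θ i) = 1 + ∑ i ∈ Finset.univ.erase z, (x i : ℂ) * θ i := by
    rw [← Finset.add_sum_erase _ _ (Finset.mem_univ z), hθ0, hx0]
    push_cast; ring
  have hdiff : (s : ℂ) * Complex.exp (Real.pi * c / 4 * Complex.I) - (1 / (Real.sqrt D : ℂ))
      = (∑ i ∈ Finset.univ.erase z, (x i : ℂ) * θ i) / (Real.sqrt D : ℂ) := by
    rw [hgauss, hsplit]
    field_simp
    ring
  -- bound the sum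
  have hbound : ‖∑ i ∈ Finset.univ.erase z, (x i : ℂ) * θ i‖ ≤ D - 1 := by
    calc ‖∑ i ∈ Finset.univ.erase z, (x i : ℂ) * θ i‖
        ≤ ∑ i ∈ Finset.univ.erase z, ‖(x i : ℂ) * θ i‖ := by
          exact norm_sum_le _ _
      _ = ∑ i ∈ Finset.univ.erase z, x i := by
          apply Finset.sum_congr rfl
          intro i _
          rw [norm_mul, hθ i, mul_one, Complex.norm_real, Real.norm_of_nonneg (hx i).le]
      _ = D - 1 := by
          have := Finset.add_sum_erase _ x (Finset.mem_univ z)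
          rw [hsum, hx0] at this
          linarith
  have habs : ‖(s : ℂ) * Complex.exp (Real.pi * c / 4 * Complex.I)
      - (1 / (Real.sqrt D : ℂ))‖ ≤ (D - 1) / Real.sqrt D := by
    rw [hdiff, norm_div, Complex.norm_real, Real.norm_of_nonneg hsq.le]
    gcongr
  have hpart1 : ‖(s : ℂ) * Complex.exp (Real.pi * c / 4 * Complex.I)
      - (1 / (Real.sqrt D : ℂ))‖ ^ 2 ≤ (D - 1) ^ 2 / D := by
    have h1 : ((D - 1) / Real.sqrt D) ^ 2 = (D - 1) ^ 2 / D := by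
      rw [div_pow, hsqsq]
    rw [← h1]
    exact pow_le_pow_left₀ (norm_nonneg _) habs 2
  refine ⟨hpart1, ?_⟩
  -- compute the abs squared explicitly
  set t := Real.pi * c / 4 with ht
  have harg : ((Real.pi : ℂ) * c / 4 * Complex.I) = (t : ℂ) * Complex.I := by
    push_cast [ht]; ring
  have hexp : Complex.exp ((Real.pi : ℂ) * c / 4 * Complex.I)
      = (Real.cos t : ℂ) + (Real.sin t : ℂ) * Complex.I := by
    rw [harg, Complex.exp_mul_I, ← Complex.ofReal_cos, ← Complex.ofReal_sin]
  have hexpr : (s : ℂ) * Complex.exp (Real.pi * c / 4 * Complex.I) - (1 / (Real.sqrt D : ℂ))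
      = ((s * Real.cos t - 1 / Real.sqrt D : ℝ) : ℂ) + ((s * Real.sin t : ℝ) : ℂ) * Complex.I := by
    rw [hexp]
    push_cast
    ring
  have hval : ‖(s : ℂ) * Complex.exp (Real.pi * c / 4 * Complex.I)
      - (1 / (Real.sqrt D : ℂ))‖ ^ 2
      = (s * Real.cos t - 1 / Real.sqrt D) ^ 2 + (s * Real.sin t) ^ 2 := by
    rw [hexpr, Complex.sq_norm, Complex.normSq_add_mul_I]
  rw [hval] at hpart1
  have hs2 : s ^ 2 = 1 := by rcases hs with h | h <;> rw [h] <;> norm_num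
  have hpyth : Real.sin t ^ 2 + Real.cos t ^ 2 = 1 := Real.sin_sq_add_cos_sq t
  set u := Real.sqrt D with hu
  have h1 : (1/u)^2 = 1/D := by rw [div_pow, one_pow, hsqsq]
  have hexpand : (s * Real.cos t - 1/u)^2 + (s*Real.sin t)^2
      = 1 + 1/D - 2*(s*Real.cos t)/u := by
    linear_combination (Real.cos t^2 + Real.sin t^2) * hs2 + hpyth + h1
  have h : 1 + 1/D - 2*(s*Real.cos t)/u ≤ (D-1)^2/D := by
    rw [← hexpand]; exact hpart1
  have h3 : (2*(s*Real.cos t)/u)*D = 2*(s*Real.cos t)*u := by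
    rw [div_mul_eq_mul_div, ← hsqsq]; field_simp
  have hDinv : (1/D)*D = 1 := by field_simp
  have hdd : (D-1)^2/D*D = (D-1)^2 := by field_simp
  have hmul := mul_le_mul_of_nonneg_right h hDpos.le
  have hkey : 2*(s*Real.cos t)*u ≥ (3 - D) * D := by nlinarith [hmul, h3, hDinv, hdd]
  nlinarith [hkey, hsq, hsqsq]
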